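/- Let Q be a finite quiver without oriented cycles. Then the cone C_Q = Σ_{α ∈ Q_1} ℕ·(e_{t(α)} - e_{s(α)}) ⊆ ℤ^{Q_0} equals the set X_Q of all x ∈ ℤ^{Q_0} with Σ_{i ∈ Q_0} x_i = 0 and Σ_{i ∈ F} x_i ≥ 0 for every filter F in Q. -/

import Mathlib

theorem cone_eq_XQ {V A : Type} [Fintype V] [DecidableEq V] (s t : A → V)
    (hacyc : ∀ v : V, ¬ Relation.TransGen (fun u w : V => ∃ a : A, s a = u ∧ t a = w) v v)
    (x : V → ℤ) :
    x ∈ AddSubmonoid.closure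
        {y : V → ℤ | ∃ a : A, y = Pi.single (t a) 1 - Pi.single (s a) 1} ↔
      (∑ i, x i = 0) ∧
        ∀ F : Finset V, (∀ a : A, s a ∈ F → t a ∈ F) → 0 ≤ ∑ i ∈ F, x i := by
  classical
  have hsingle : ∀ (i : V) (F : Finset V), ∑ j ∈ F, Pi.single i (1:ℤ) j = if i ∈ F then 1 else 0 :=
    fun i F => Finset.sum_pi_single' i 1 F
  constructor
  · intro hx
    induction hx using AddSubmonoid.closure_induction with
    | mem y hy =>
      obtain ⟨a, rfl⟩ := hy
      constructor
      · simp [Pi.sub_apply, Finset.sum_sub_distrib, hsingle]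
      · intro F hF
        simp only [Pi.sub_apply]
        rw [Finset.sum_sub_distrib, hsingle, hsingle]
        by_cases h1 : s a ∈ F
        · simp [h1, hF a h1]
        · by_cases h2 : t a ∈ F <;> simp [h1, h2]
    | zero => simp
    | add y z hy hz ihy ihz =>
      refine ⟨by simp [Pi.add_apply, Finset.sum_add_distrib, ihy.1, ihz.1], fun F hF => ?_⟩
      simp only [Pi.add_apply]
      rw [Finset.sum_add_distrib]
      have := ihy.2 F hF
      have := ihz.2 F hF
      linarith
  · rintro ⟨hsum, hfil⟩
    -- height function
    obtain ⟨h, hh⟩ : ∃ h : V → ℕ, ∀ a : A, h (s a) < h (t a) := by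
      refine ⟨fun v => (Finset.univ.filter
        (fun u => Relation.TransGen (fun u w : V => ∃ a : A, s a = u ∧ t a = w) u v)).card,
        fun a => ?_⟩
      apply Finset.card_lt_card
      rw [Finset.ssubset_iff_of_subset]
      · refine ⟨s a, ?_, ?_⟩
        · simp only [Finset.mem_filter, Finset.mem_univ, true_and]
          exact Relation.TransGen.single ⟨a, rfl, rfl⟩
        · simp only [Finset.mem_filter, Finset.mem_univ, true_and]
          exact hacyc (s a)
      · intro u hu
        simp only [Finset.mem_filter, Finset.mem_univ, true_and] at hu ⊢
        exact hu.tail ⟨a, rfl, rfl⟩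
    -- weighted single sums
    have hsw : ∀ i : V, ∑ v, (Pi.single i (1:ℤ) : V → ℤ) v * (h v : ℤ) = (h i : ℤ) := by
      intro i
      simp [Pi.single_apply, ite_mul, Finset.sum_ite_eq]
    -- nonnegativity of the measure
    have Mnn : ∀ y : V → ℤ, (∀ F : Finset V, (∀ a, s a ∈ F → t a ∈ F) → 0 ≤ ∑ i ∈ F, y i) →
        0 ≤ ∑ v, y v * (h v : ℤ) := by
      intro y hy
      set N := Finset.univ.sup h + 1 with hN
      have hlt : ∀ v, h v < N := fun v => Nat.lt_succ_of_le (Finset.le_sup (Finset.mem_univ v))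
      have e1 : ∀ v, y v * (h v : ℤ) = ∑ k ∈ Finset.range N, if k < h v then y v else 0 := by
        intro v
        rw [Finset.sum_ite, Finset.sum_const_zero, add_zero, Finset.sum_const]
        have : (Finset.range N).filter (fun k => k < h v) = Finset.range (h v) := by
          ext k
          simp only [Finset.mem_filter, Finset.mem_range]
          exact ⟨fun h2 => h2.2, fun h2 => ⟨h2.trans (hlt v), h2⟩⟩
        rw [this, Finset.card_range, nsmul_eq_mul, mul_comm]
      calc (0:ℤ) ≤ ∑ k ∈ Finset.range N, ∑ v ∈ Finset.univ.filter (fun v => k < h v), y v := by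
            apply Finset.sum_nonneg
            intro k _
            apply hy
            intro a ha
            simp only [Finset.mem_filter, Finset.mem_univ, true_and] at ha ⊢
            exact ha.trans (hh a)
        _ = ∑ k ∈ Finset.range N, ∑ v, if k < h v then y v else 0 :=
            Finset.sum_congr rfl fun k _ => Finset.sum_filter _ _
        _ = ∑ v, ∑ k ∈ Finset.range N, if k < h v then y v else 0 := Finset.sum_comm
        _ = ∑ v, y v * (h v : ℤ) := Finset.sum_congr rfl fun v _ => (e1 v).symm
    -- main induction
    have key : ∀ n : ℕ, ∀ y : V → ℤ, (∑ i, y i = 0) →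
        (∀ F : Finset V, (∀ a : A, s a ∈ F → t a ∈ F) → 0 ≤ ∑ i ∈ F, y i) →
        (∑ v, y v * (h v : ℤ)).toNat = n →
        y ∈ AddSubmonoid.closure
          {y : V → ℤ | ∃ a : A, y = Pi.single (t a) 1 - Pi.single (s a) 1} := by
      intro n
      induction n using Nat.strong_induction_on with
      | _ n ih =>
        intro y hysum hyfil hM
        by_cases hy0 : y = 0
        · rw [hy0]; exact zero_mem _
        · -- find a positive vertex
          obtain ⟨v, hv⟩ : ∃ v : V, 0 < y v := by
            by_contra hc
            push_neg at hc
            apply hy0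
            funext w
            have := (Finset.sum_eq_zero_iff_of_nonpos (fun i _ => hc i)).mp hysum w
              (Finset.mem_univ w)
            exact this
          -- minimal zero-sum filter containing v
          set S : Finset (Finset V) := Finset.univ.filter
            (fun F => (∀ a : A, s a ∈ F → t a ∈ F) ∧ v ∈ F ∧ ∑ i ∈ F, y i = 0) with hS
          have hSuniv : (Finset.univ : Finset V) ∈ S := by
            rw [hS, Finset.mem_filter]
            exact ⟨Finset.mem_univ _, fun a _ => Finset.mem_univ _, Finset.mem_univ v, hysum⟩
          obtain ⟨F₀, hF₀S, hF₀min⟩ := S.exists_min_image Finset.card ⟨_, hSuniv⟩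
          simp only [hS, Finset.mem_filter, Finset.mem_univ, true_and] at hF₀S
          obtain ⟨hF₀fil, hvF₀, hF₀sum⟩ := hF₀S
          -- F₀ is contained in every zero-sum filter containing v
          have hmin : ∀ F : Finset V, (∀ a : A, s a ∈ F → t a ∈ F) → v ∈ F →
              (∑ i ∈ F, y i = 0) → F₀ ⊆ F := by
            intro F hFfil hvF hFsum
            have hinterfil : ∀ a : A, s a ∈ F₀ ∩ F → t a ∈ F₀ ∩ F := by
              intro a ha
              rw [Finset.mem_inter] at ha ⊢
              exact ⟨hF₀fil a ha.1, hFfil a ha.2⟩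
            have hunionfil : ∀ a : A, s a ∈ F₀ ∪ F → t a ∈ F₀ ∪ F := by
              intro a ha
              rw [Finset.mem_union] at ha ⊢
              rcases ha with ha | ha
              · exact Or.inl (hF₀fil a ha)
              · exact Or.inr (hFfil a ha)
            have h1 : ∑ i ∈ F₀ ∪ F, y i + ∑ i ∈ F₀ ∩ F, y i = ∑ i ∈ F₀, y i + ∑ i ∈ F, y i :=
              Finset.sum_union_inter
            have h2 : 0 ≤ ∑ i ∈ F₀ ∪ F, y i := hyfil _ hunionfil
            have h3 : 0 ≤ ∑ i ∈ F₀ ∩ F, y i := hyfil _ hinterfil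
            have hintersum : ∑ i ∈ F₀ ∩ F, y i = 0 := by
              rw [hF₀sum, hFsum] at h1; linarith
            have hmem : F₀ ∩ F ∈ S := by
              simp only [hS, Finset.mem_filter, Finset.mem_univ, true_and]
              exact ⟨hinterfil, Finset.mem_inter.mpr ⟨hvF₀, hvF⟩, hintersum⟩
            have := hF₀min _ hmem
            have heq : F₀ ∩ F = F₀ :=
              Finset.eq_of_subset_of_card_le (Finset.inter_subset_left) this
            intro w hw
            rw [← heq] at hw
            exact (Finset.mem_inter.mp hw).2
          -- find an arrow into v with source in F₀
          obtain ⟨a, hta, hsa⟩ : ∃ a : A, t a = v ∧ s a ∈ F₀ := by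
            by_contra hc
            push_neg at hc
            have hfil' : ∀ a : A, s a ∈ F₀.erase v → t a ∈ F₀.erase v := by
              intro a ha
              have hs' : s a ∈ F₀ := Finset.mem_of_mem_erase ha
              refine Finset.mem_erase.mpr ⟨?_, hF₀fil a hs'⟩
              intro hEq
              exact (hc a hEq) hs'
            have := hyfil _ hfil'
            have hes : ∑ i ∈ F₀.erase v, y i + y v = ∑ i ∈ F₀, y i :=
              Finset.sum_erase_add _ _ hvF₀
            rw [hF₀sum] at hes
            linarith
          -- subtract the generator
          set g : V → ℤ := Pi.single (t a) 1 - Pi.single (s a) 1 with hg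
          set y' : V → ℤ := y - g with hy'
          have hy'sum : ∑ i, y' i = 0 := by
            simp [hy', hg, Finset.sum_sub_distrib, hsingle, hysum]
          have hy'fil : ∀ F : Finset V, (∀ a : A, s a ∈ F → t a ∈ F) → 0 ≤ ∑ i ∈ F, y' i := by
            intro F hFfil
            have hexp : ∑ i ∈ F, y' i = ∑ i ∈ F, y i -
                ((if t a ∈ F then (1:ℤ) else 0) - (if s a ∈ F then (1:ℤ) else 0)) := by
              simp [hy', hg, Finset.sum_sub_distrib, hsingle]
            rw [hexp]
            by_cases h1 : t a ∈ F
            · by_cases h2 : s a ∈ F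
              · simpa [h1, h2] using hyfil F hFfil
              · -- need sum ≥ 1
                have h3 : 0 ≤ ∑ i ∈ F, y i := hyfil F hFfil
                have h4 : ∑ i ∈ F, y i ≠ 0 := by
                  intro h0
                  exact h2 (hmin F hFfil (hta ▸ h1) h0 hsa)
                simp only [h1, h2, if_true, if_false]
                omega
            · have h2 : s a ∉ F := fun hs' => h1 (hFfil a hs')
              simpa [h1, h2] using hyfil F hFfil
          have hMg : ∑ w, g w * (h w : ℤ) = (h (t a) : ℤ) - (h (s a) : ℤ) := by
            simp [hg, Finset.sum_sub_distrib, sub_mul, hsw]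
          have hMy' : ∑ w, y' w * (h w : ℤ) =
              ∑ w, y w * (h w : ℤ) - ((h (t a) : ℤ) - (h (s a) : ℤ)) := by
            rw [← hMg, ← Finset.sum_sub_distrib]
            exact Finset.sum_congr rfl fun w _ => by simp [hy', sub_mul]
          have hlt : (h (s a) : ℤ) < (h (t a) : ℤ) := by exact_mod_cast hh a
          have hnn' : 0 ≤ ∑ w, y' w * (h w : ℤ) := Mnn y' hy'fil
          have hnn : 0 ≤ ∑ w, y w * (h w : ℤ) := Mnn y hyfil
          have hdec : (∑ w, y' w * (h w : ℤ)).toNat < n := by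
            rw [hMy'] at hnn' ⊢
            omega
          have hcl := ih _ hdec y' hy'sum hy'fil rfl
          have hgmem : g ∈ AddSubmonoid.closure
              {y : V → ℤ | ∃ a : A, y = Pi.single (t a) 1 - Pi.single (s a) 1} :=
            AddSubmonoid.subset_closure ⟨a, rfl⟩
          have : y = y' + g := by simp [hy']
          rw [this]
          exact add_mem hcl hgmem
    exact key _ x hsum hfil rfl
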